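/- Let G ≥ 1 and let A_1, …, A_G > 0 and P_t > 0 be real numbers. Define γ* = 1 / ( (∑_{g=1}^G (1 + 1/(P_t · A_g))) − 1 ) and, for each g, define P_g = γ*·(P_t + 1/A_g)/(1 + γ*). Then (i) all P_g are positive, (ii) ∑_{g=1}^G P_g = P_t, and (iii) for every g, P_g · A_g / ((P_t − P_g)·A_g + 1) = γ*; that is, this power allocation exhausts the power budget and equalizes all group SINRs at the value γ*. -/

import Mathlib

/-- TIN optimal power allocation: the closed-form allocation is positive,
exhausts the power budget, and equalizes all group SINRs at `γ`. -/
theorem tin_closed_form_power_allocation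
    (G : ℕ) (hG : 1 ≤ G) (A : Fin G → ℝ) (hA : ∀ g, 0 < A g)
    (Pt : ℝ) (hPt : 0 < Pt)
    (γ : ℝ) (hγ : γ = 1 / ((∑ g, (1 + 1 / (Pt * A g))) - 1))
    (P : Fin G → ℝ) (hP : ∀ g, P g = γ * (Pt + 1 / A g) / (1 + γ)) :
    (∀ g, 0 < P g) ∧ (∑ g, P g) = Pt ∧
      (∀ g, P g * A g / ((Pt - P g) * A g + 1) = γ) := by
  have hne : (Finset.univ : Finset (Fin G)).Nonempty := ⟨⟨0, hG⟩, Finset.mem_univ _⟩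
  set S : ℝ := ∑ g, (1 + 1 / (Pt * A g)) with hSdef
  have hS1 : 1 < S := by
    calc (1:ℝ) ≤ ∑ _g : Fin G, (1:ℝ) := by
          rw [Finset.sum_const, Finset.card_univ, Fintype.card_fin, nsmul_eq_mul, mul_one]
          exact_mod_cast hG
      _ < S := by
          apply Finset.sum_lt_sum_of_nonempty hne
          intro g _
          have h := mul_pos hPt (hA g)
          have : 0 < 1 / (Pt * A g) := by positivity
          linarith
  have hγpos : 0 < γ := by
    rw [hγ]
    exact one_div_pos.mpr (by linarith)
  have h1γ : (1 : ℝ) + γ ≠ 0 := by positivity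
  have hγS : γ * (S - 1) = 1 := by
    rw [hγ]; field_simp
    exact div_self (by linarith)
  have hpos : ∀ g, 0 < P g := by
    intro g
    rw [hP g]
    have hAg := hA g
    positivity
  refine ⟨hpos, ?_, ?_⟩
  · have hPtS : Pt * S = ∑ g, (Pt + 1 / A g) := by
      rw [hSdef, Finset.mul_sum]
      refine Finset.sum_congr rfl (fun g _ => ?_)
      have hAg := (hA g).ne'
      field_simp
    have hsum : ∑ g, P g = γ * (Pt * S) / (1 + γ) := by
      rw [hPtS, Finset.mul_sum, Finset.sum_div]
      exact Finset.sum_congr rfl (fun g _ => hP g)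
    rw [hsum]
    rw [div_eq_iff h1γ]
    linear_combination Pt * hγS
  · intro g
    have hAg := hA g
    have hD : (Pt - P g) * A g + 1 = (Pt * A g + 1) / (1 + γ) := by
      rw [hP g]
      field_simp
      ring
    rw [hD, hP g]
    rw [div_eq_iff (by positivity : (Pt * A g + 1) / (1 + γ) ≠ 0)]
    field_simp
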